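/- Let V be a real Hilbert space, T > 0, σ > 0, and let φ : V → ℝ be convex. For i = 1, 2 let gᵢ : [0,T] → V be Bochner square-integrable, let wᵢ : [0,T] → V be Bochner square-integrable, set zᵢ(t) = ∫₀ᵗ wᵢ(s) ds, and assume that for almost every t ∈ [0,T] and every v ∈ V: φ(v) ≥ φ(wᵢ(t)) + ⟨gᵢ(t) − zᵢ(t) − σ·wᵢ(t), v − wᵢ(t)⟩. Then: (a) for every t ∈ [0,T], (1/2)‖z₁(t) − z₂(t)‖² + σ∫₀ᵗ‖w₁(s) − w₂(s)‖² ds ≤ ∫₀ᵗ⟨g₁(s) − g₂(s), w₁(s) − w₂(s)⟩ ds; consequently (b) ∫₀ᵀ‖w₁ − w₂‖² ds ≤ (1/σ²)∫₀ᵀ‖g₁ − g₂‖² ds, and (c) ‖z₁(t) − z₂(t)‖ ≤ (2σ)^{−1/2}·(∫₀ᵀ‖g₁ − g₂‖² ds)^{1/2} for every t ∈ [0,T]. -/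

import Mathlib

open MeasureTheory
open scoped RealInnerProductSpace

set_option linter.unusedSectionVars false
set_option linter.unusedVariables false

section AuxLemmas

variable {V : Type*} [NormedAddCommGroup V] [InnerProductSpace ℝ V] [CompleteSpace V]

lemma memL2_integrable_inner {α : Type*} [MeasurableSpace α] {μ : Measure α}
    {f h : α → V} (hf : MemLp f 2 μ) (hh : MemLp h 2 μ) :
    Integrable (fun x => ⟪f x, h x⟫) μ := by
  have key := L2.integrable_inner (𝕜 := ℝ) (hf.toLp f) (hh.toLp h)
  refine key.congr ?_
  filter_upwards [hf.coeFn_toLp, hh.coeFn_toLp] with x h1 h2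
  rw [h1, h2]

lemma young_ineq (a b c : ℝ) (hc : 0 < c) : a * b ≤ c/2 * b^2 + 1/(2*c) * a^2 := by
  have h1 : a * b - c/2 * b^2 ≤ a^2 / (2*c) := by
    rw [le_div_iff₀ (by positivity : (0:ℝ) < 2*c)]
    nlinarith [sq_nonneg (a - c*b)]
  have h2 : 1/(2*c) * a^2 = a^2 / (2*c) := by ring
  linarith

lemma double_integral_identity (f : ℝ → V) (t : ℝ)
    (hf : IntegrableOn f (Set.Ioc 0 t)) :
    ‖∫ s in Set.Ioc (0:ℝ) t, f s‖ ^ 2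
      = 2 * ∫ s in Set.Ioc (0:ℝ) t, ⟪f s, ∫ u in Set.Ioc (0:ℝ) s, f u⟫ := by
  set μ : Measure ℝ := volume.restrict (Set.Ioc 0 t) with hμ
  have hfi : Integrable f μ := hf
  set F : ℝ × ℝ → ℝ := fun p => ⟪f p.1, f p.2⟫ with hFdef
  have hFm : AEStronglyMeasurable F (μ.prod μ) :=
    hfi.aestronglyMeasurable.comp_fst.inner (𝕜 := ℝ) hfi.aestronglyMeasurable.comp_snd
  have hF : Integrable F (μ.prod μ) := by
    refine Integrable.mono' (hfi.norm.mul_prod hfi.norm) hFm ?_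
    exact Filter.Eventually.of_forall fun p => norm_inner_le_norm _ _
  have step1 : ‖∫ s, f s ∂μ‖ ^ 2 = ∫ a, ∫ b, F (a, b) ∂μ ∂μ := by
    calc ‖∫ s, f s ∂μ‖ ^ 2 = ⟪∫ s, f s ∂μ, ∫ s, f s ∂μ⟫ :=
          (real_inner_self_eq_norm_sq _).symm
      _ = ∫ a, ⟪∫ s, f s ∂μ, f a⟫ ∂μ := (integral_inner hfi _).symm
      _ = ∫ a, ∫ b, F (a, b) ∂μ ∂μ := by
          refine integral_congr_ae (Filter.Eventually.of_forall fun a => ?_)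
          show ⟪∫ s, f s ∂μ, f a⟫ = ∫ b, F (a, b) ∂μ
          rw [real_inner_comm, ← integral_inner hfi (f a)]
  set S : Set (ℝ × ℝ) := {p : ℝ × ℝ | p.2 ≤ p.1} with hS
  have hSm : MeasurableSet S := measurableSet_le measurable_snd measurable_fst
  have hF1 : Integrable (S.indicator F) (μ.prod μ) := hF.indicator hSm
  have hF2 : Integrable (Sᶜ.indicator F) (μ.prod μ) := hF.indicator hSm.compl
  have hsplit : ∫ p, F p ∂(μ.prod μ)
      = (∫ p, S.indicator F p ∂(μ.prod μ)) + ∫ p, Sᶜ.indicator F p ∂(μ.prod μ) := by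
    rw [← integral_add hF1 hF2]
    refine integral_congr_ae (Filter.Eventually.of_forall fun p => ?_)
    by_cases hp : p ∈ S <;> simp [Set.indicator_apply, hp]
  have hiint : ∫ a, ∫ b, F (a, b) ∂μ ∂μ = ∫ p, F p ∂(μ.prod μ) := by
    exact integral_integral (f := fun a b => F (a, b)) hF
  have term1 : ∫ p, S.indicator F p ∂(μ.prod μ)
      = ∫ a, ⟪f a, ∫ u in Set.Ioc (0:ℝ) a, f u⟫ ∂μ := by
    rw [integral_prod _ hF1]
    refine integral_congr_ae ?_
    filter_upwards [ae_restrict_mem measurableSet_Ioc] with a ha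
    have hcur : (fun b => S.indicator F (a, b))
        = (Set.Iic a).indicator (fun b => ⟪f a, f b⟫) := by
      funext b
      by_cases hb : b ≤ a <;> simp [Set.indicator_apply, hS, hb, hFdef]
    rw [hcur, integral_indicator measurableSet_Iic, hμ,
      Measure.restrict_restrict measurableSet_Iic]
    have hset : Set.Iic a ∩ Set.Ioc 0 t = Set.Ioc 0 a := by
      ext x
      simp only [Set.mem_inter_iff, Set.mem_Iic, Set.mem_Ioc]
      exact ⟨fun h => ⟨h.2.1, h.1⟩, fun h => ⟨h.2, h.1, h.2.trans ha.2⟩⟩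
    rw [hset]
    exact integral_inner (hf.mono_set (Set.Ioc_subset_Ioc_right ha.2)) (f a)
  have term2 : ∫ p, Sᶜ.indicator F p ∂(μ.prod μ)
      = ∫ b, ⟪f b, ∫ u in Set.Ioc (0:ℝ) b, f u⟫ ∂μ := by
    rw [integral_prod_symm _ hF2]
    refine integral_congr_ae ?_
    filter_upwards [ae_restrict_mem measurableSet_Ioc] with b hb
    have hcur : (fun a => Sᶜ.indicator F (a, b))
        = (Set.Iio b).indicator (fun a => ⟪f a, f b⟫) := by
      funext a
      by_cases hab : b ≤ a <;>
        simp [Set.indicator_apply, hS, hab, not_le.2, lt_of_not_ge, hFdef]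
    rw [hcur, integral_indicator measurableSet_Iio, hμ,
      Measure.restrict_restrict measurableSet_Iio]
    have hset : Set.Iio b ∩ Set.Ioc 0 t = Set.Ioo 0 b := by
      ext x
      simp only [Set.mem_inter_iff, Set.mem_Iio, Set.mem_Ioo, Set.mem_Ioc]
      exact ⟨fun h => ⟨h.2.1, h.1⟩, fun h => ⟨h.2, h.1, (h.2.le.trans hb.2)⟩⟩
    rw [hset, ← integral_Ioc_eq_integral_Ioo]
    have hcomm : ∫ a in Set.Ioc (0:ℝ) b, ⟪f a, f b⟫ = ∫ a in Set.Ioc (0:ℝ) b, ⟪f b, f a⟫ :=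
      integral_congr_ae (Filter.Eventually.of_forall fun a => real_inner_comm _ _)
    rw [hcomm]
    exact integral_inner (hf.mono_set (Set.Ioc_subset_Ioc_right hb.2)) (f b)
  calc ‖∫ s in Set.Ioc (0:ℝ) t, f s‖ ^ 2 = ∫ a, ∫ b, F (a, b) ∂μ ∂μ := step1
    _ = (∫ p, S.indicator F p ∂(μ.prod μ)) + ∫ p, Sᶜ.indicator F p ∂(μ.prod μ) := by
        rw [hiint, hsplit]
    _ = 2 * ∫ s in Set.Ioc (0:ℝ) t, ⟪f s, ∫ u in Set.Ioc (0:ℝ) s, f u⟫ := by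
        rw [term1, term2]; ring

lemma main_aux (T σ : ℝ) (hT : 0 < T) (hσ : 0 < σ)
    (g d z : ℝ → V)
    (hg : MemLp g 2 (volume.restrict (Set.Icc 0 T)))
    (hd : MemLp d 2 (volume.restrict (Set.Icc 0 T)))
    (hz : ∀ t ∈ Set.Icc (0:ℝ) T, z t = ∫ s in Set.Ioc (0:ℝ) t, d s)
    (hineq : ∀ᵐ s ∂(volume.restrict (Set.Icc (0:ℝ) T)),
        ⟪z s, d s⟫ + σ * ‖d s‖ ^ 2 ≤ ⟪g s, d s⟫) :
    (∀ t ∈ Set.Icc (0:ℝ) T,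
      (1/2) * ‖z t‖ ^ 2 + σ * ∫ s in Set.Ioc (0:ℝ) t, ‖d s‖ ^ 2
        ≤ ∫ s in Set.Ioc (0:ℝ) t, ⟪g s, d s⟫) ∧
    (∫ s in Set.Ioc (0:ℝ) T, ‖d s‖ ^ 2
        ≤ (1 / σ ^ 2) * ∫ s in Set.Ioc (0:ℝ) T, ‖g s‖ ^ 2) ∧
    (∀ t ∈ Set.Icc (0:ℝ) T, ‖z t‖ ≤ (Real.sqrt (2 * σ))⁻¹ *
        Real.sqrt (∫ s in Set.Ioc (0:ℝ) T, ‖g s‖ ^ 2)) := by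
  have hσ0 : σ ≠ 0 := ne_of_gt hσ
  haveI : IsFiniteMeasure (volume.restrict (Set.Icc (0:ℝ) T)) :=
    ⟨by rw [Measure.restrict_apply_univ]; exact measure_Icc_lt_top⟩
  have hdint : IntegrableOn d (Set.Icc 0 T) := hd.integrable one_le_two
  have hgd : Integrable (fun s => ⟪g s, d s⟫) (volume.restrict (Set.Icc 0 T)) :=
    memL2_integrable_inner hg hd
  have hdsq : Integrable (fun s => ‖d s‖ ^ 2) (volume.restrict (Set.Icc 0 T)) :=
    (memL2_integrable_inner hd hd).congr
      (Filter.Eventually.of_forall fun s => real_inner_self_eq_norm_sq _)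
  have hgsq : Integrable (fun s => ‖g s‖ ^ 2) (volume.restrict (Set.Icc 0 T)) :=
    (memL2_integrable_inner hg hg).congr
      (Filter.Eventually.of_forall fun s => real_inner_self_eq_norm_sq _)
  set C : ℝ := ∫ u in Set.Icc (0:ℝ) T, ‖d u‖ with hC
  have hzbound : ∀ t ∈ Set.Icc (0:ℝ) T, ‖z t‖ ≤ C := by
    intro t ht
    rw [hz t ht]
    refine (norm_integral_le_integral_norm _).trans ?_
    refine setIntegral_mono_set hdint.norm
      (Filter.Eventually.of_forall fun s => norm_nonneg _) ?_
    exact HasSubset.Subset.eventuallyLE (fun x hx => ⟨le_of_lt hx.1, hx.2.trans ht.2⟩)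
  have hzcont : ContinuousOn z (Set.Icc 0 T) := by
    refine (intervalIntegral.continuousOn_primitive (f := d) (a := 0) (b := T) hdint).congr ?_
    exact fun t ht => hz t ht
  have hzm : AEStronglyMeasurable z (volume.restrict (Set.Icc (0:ℝ) T)) :=
    hzcont.aestronglyMeasurable measurableSet_Icc
  have hzd : Integrable (fun s => ⟪z s, d s⟫) (volume.restrict (Set.Icc 0 T)) := by
    refine Integrable.mono' (hdint.norm.const_mul C) (hzm.inner hd.aestronglyMeasurable) ?_
    filter_upwards [ae_restrict_mem measurableSet_Icc] with s hs
    calc ‖⟪z s, d s⟫‖ ≤ ‖z s‖ * ‖d s‖ := norm_inner_le_norm _ _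
      _ ≤ C * ‖d s‖ := mul_le_mul_of_nonneg_right (hzbound s hs) (norm_nonneg _)
  -- part (a)
  have parta : ∀ t ∈ Set.Icc (0:ℝ) T,
      (1/2) * ‖z t‖ ^ 2 + σ * ∫ s in Set.Ioc (0:ℝ) t, ‖d s‖ ^ 2
        ≤ ∫ s in Set.Ioc (0:ℝ) t, ⟪g s, d s⟫ := by
    intro t ht
    have hsub : Set.Ioc (0:ℝ) t ⊆ Set.Icc (0:ℝ) T :=
      fun x hx => ⟨le_of_lt hx.1, hx.2.trans ht.2⟩
    have hdloc : IntegrableOn d (Set.Ioc 0 t) := hdint.mono_set hsub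
    have hzt : ‖z t‖ ^ 2 = 2 * ∫ s in Set.Ioc (0:ℝ) t, ⟪z s, d s⟫ := by
      rw [hz t ht, double_integral_identity d t hdloc]
      congr 1
      refine integral_congr_ae ?_
      filter_upwards [ae_restrict_mem measurableSet_Ioc] with s hs
      rw [hz s ⟨le_of_lt hs.1, hs.2.trans ht.2⟩, real_inner_comm]
    have hmono : ∫ s in Set.Ioc (0:ℝ) t, (⟪z s, d s⟫ + σ * ‖d s‖ ^ 2)
        ≤ ∫ s in Set.Ioc (0:ℝ) t, ⟪g s, d s⟫ := by
      refine integral_mono_ae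
        ((IntegrableOn.mono_set hzd hsub).add ((IntegrableOn.mono_set hdsq hsub).const_mul σ))
        (IntegrableOn.mono_set hgd hsub) ?_
      exact ae_restrict_of_ae_restrict_of_subset hsub hineq
    have hsplit : ∫ s in Set.Ioc (0:ℝ) t, (⟪z s, d s⟫ + σ * ‖d s‖ ^ 2)
        = (∫ s in Set.Ioc (0:ℝ) t, ⟪z s, d s⟫)
          + σ * ∫ s in Set.Ioc (0:ℝ) t, ‖d s‖ ^ 2 := by
      rw [integral_add (IntegrableOn.mono_set hzd hsub)
        ((IntegrableOn.mono_set hdsq hsub).const_mul σ), integral_const_mul]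
    linarith
  refine ⟨parta, ?_, ?_⟩
  -- part (b)
  · have haT := parta T ⟨hT.le, le_refl T⟩
    have hsubT : Set.Ioc (0:ℝ) T ⊆ Set.Icc (0:ℝ) T := Set.Ioc_subset_Icc_self
    have hbnd : ∫ s in Set.Ioc (0:ℝ) T, ⟪g s, d s⟫
        ≤ σ/2 * (∫ s in Set.Ioc (0:ℝ) T, ‖d s‖ ^ 2)
          + 1/(2*σ) * ∫ s in Set.Ioc (0:ℝ) T, ‖g s‖ ^ 2 := by
      have hmono : ∫ s in Set.Ioc (0:ℝ) T, ⟪g s, d s⟫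
          ≤ ∫ s in Set.Ioc (0:ℝ) T, (σ/2 * ‖d s‖ ^ 2 + 1/(2*σ) * ‖g s‖ ^ 2) := by
        refine integral_mono_ae (IntegrableOn.mono_set hgd hsubT)
          (((IntegrableOn.mono_set hdsq hsubT).const_mul _).add
            ((IntegrableOn.mono_set hgsq hsubT).const_mul _)) ?_
        refine Filter.Eventually.of_forall fun s => ?_
        exact (real_inner_le_norm _ _).trans (young_ineq _ _ σ hσ)
      rw [integral_add ((IntegrableOn.mono_set hdsq hsubT).const_mul _)
        ((IntegrableOn.mono_set hgsq hsubT).const_mul _), integral_const_mul,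
        integral_const_mul] at hmono
      exact hmono
    have hz2 : (0:ℝ) ≤ ‖z T‖ ^ 2 := sq_nonneg _
    set X : ℝ := ∫ s in Set.Ioc (0:ℝ) T, ‖d s‖ ^ 2 with hX
    set Y : ℝ := ∫ s in Set.Ioc (0:ℝ) T, ‖g s‖ ^ 2 with hY
    have hXY : σ/2 * X ≤ 1/(2*σ) * Y := by linarith
    calc X = (2/σ) * (σ/2 * X) := by field_simp
      _ ≤ (2/σ) * (1/(2*σ) * Y) := mul_le_mul_of_nonneg_left hXY (by positivity)
      _ = 1/σ^2 * Y := by field_simp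
  -- part (c)
  · intro t ht
    have ha := parta t ht
    have hsub : Set.Ioc (0:ℝ) t ⊆ Set.Icc (0:ℝ) T :=
      fun x hx => ⟨le_of_lt hx.1, hx.2.trans ht.2⟩
    have hbnd : ∫ s in Set.Ioc (0:ℝ) t, ⟪g s, d s⟫
        ≤ σ * (∫ s in Set.Ioc (0:ℝ) t, ‖d s‖ ^ 2)
          + 1/(4*σ) * ∫ s in Set.Ioc (0:ℝ) t, ‖g s‖ ^ 2 := by
      have hpt : ∀ s : ℝ, ⟪g s, d s⟫ ≤ σ * ‖d s‖ ^ 2 + 1/(4*σ) * ‖g s‖ ^ 2 := by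
        intro s
        have h1 := (real_inner_le_norm (g s) (d s)).trans
          (young_ineq ‖g s‖ ‖d s‖ (2*σ) (by positivity))
        have h2 : (2*σ)/2 = σ := by ring
        have h3 : 1/(2*(2*σ)) = 1/(4*σ) := by congr 1; ring
        rw [h2, h3] at h1
        linarith
      have hmono : ∫ s in Set.Ioc (0:ℝ) t, ⟪g s, d s⟫
          ≤ ∫ s in Set.Ioc (0:ℝ) t, (σ * ‖d s‖ ^ 2 + 1/(4*σ) * ‖g s‖ ^ 2) := by
        refine integral_mono_ae (IntegrableOn.mono_set hgd hsub)
          (((IntegrableOn.mono_set hdsq hsub).const_mul _).add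
            ((IntegrableOn.mono_set hgsq hsub).const_mul _)) ?_
        exact Filter.Eventually.of_forall fun s => hpt s
      rw [integral_add ((IntegrableOn.mono_set hdsq hsub).const_mul _)
        ((IntegrableOn.mono_set hgsq hsub).const_mul _), integral_const_mul,
        integral_const_mul] at hmono
      exact hmono
    have hgmono : ∫ s in Set.Ioc (0:ℝ) t, ‖g s‖ ^ 2
        ≤ ∫ s in Set.Ioc (0:ℝ) T, ‖g s‖ ^ 2 := by
      conv_rhs => rw [← integral_Icc_eq_integral_Ioc]
      refine setIntegral_mono_set hgsq
        (Filter.Eventually.of_forall fun s => sq_nonneg _) ?_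
      exact HasSubset.Subset.eventuallyLE hsub
    set Y : ℝ := ∫ s in Set.Ioc (0:ℝ) T, ‖g s‖ ^ 2 with hY
    have hY0 : 0 ≤ Y := integral_nonneg fun s => sq_nonneg _
    have hgy : 1/(4*σ) * (∫ s in Set.Ioc (0:ℝ) t, ‖g s‖ ^ 2) ≤ 1/(4*σ) * Y :=
      mul_le_mul_of_nonneg_left hgmono (by positivity)
    have hz2 : ‖z t‖ ^ 2 ≤ 1/(2*σ) * Y := by
      have heq : 1/(2*σ) = 2 * (1/(4*σ)) := by field_simp; ring
      nlinarith [ha, hbnd, hgy]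
    calc ‖z t‖ = Real.sqrt (‖z t‖ ^ 2) := (Real.sqrt_sq (norm_nonneg _)).symm
      _ ≤ Real.sqrt (1/(2*σ) * Y) := Real.sqrt_le_sqrt hz2
      _ = Real.sqrt (1/(2*σ)) * Real.sqrt Y := Real.sqrt_mul (by positivity) Y
      _ = (Real.sqrt (2*σ))⁻¹ * Real.sqrt Y := by rw [one_div, Real.sqrt_inv]

end AuxLemmas

theorem lipschitz_estimate_viscous_evolution {V : Type*} [NormedAddCommGroup V]
    [InnerProductSpace ℝ V] [CompleteSpace V]
    (T σ : ℝ) (hT : 0 < T) (hσ : 0 < σ)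
    (φ : V → ℝ) (hφ : ConvexOn ℝ Set.univ φ)
    (g₁ g₂ w₁ w₂ : ℝ → V)
    (hg₁ : MemLp g₁ 2 (volume.restrict (Set.Icc 0 T)))
    (hg₂ : MemLp g₂ 2 (volume.restrict (Set.Icc 0 T)))
    (hw₁ : MemLp w₁ 2 (volume.restrict (Set.Icc 0 T)))
    (hw₂ : MemLp w₂ 2 (volume.restrict (Set.Icc 0 T)))
    (z₁ z₂ : ℝ → V)
    (hz₁ : ∀ t : ℝ, z₁ t = ∫ s in (0:ℝ)..t, w₁ s)
    (hz₂ : ∀ t : ℝ, z₂ t = ∫ s in (0:ℝ)..t, w₂ s)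
    (hvi₁ : ∀ᵐ t ∂(volume.restrict (Set.Icc 0 T)), ∀ v : V,
      φ v ≥ φ (w₁ t) + ⟪g₁ t - z₁ t - σ • w₁ t, v - w₁ t⟫)
    (hvi₂ : ∀ᵐ t ∂(volume.restrict (Set.Icc 0 T)), ∀ v : V,
      φ v ≥ φ (w₂ t) + ⟪g₂ t - z₂ t - σ • w₂ t, v - w₂ t⟫) :
    (∀ t ∈ Set.Icc (0:ℝ) T,
      (1/2) * ‖z₁ t - z₂ t‖ ^ 2 + σ * ∫ s in (0:ℝ)..t, ‖w₁ s - w₂ s‖ ^ 2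
        ≤ ∫ s in (0:ℝ)..t, ⟪g₁ s - g₂ s, w₁ s - w₂ s⟫) ∧
    (∫ s in (0:ℝ)..T, ‖w₁ s - w₂ s‖ ^ 2
        ≤ (1 / σ ^ 2) * ∫ s in (0:ℝ)..T, ‖g₁ s - g₂ s‖ ^ 2) ∧
    (∀ t ∈ Set.Icc (0:ℝ) T,
      ‖z₁ t - z₂ t‖ ≤ (Real.sqrt (2 * σ))⁻¹ *
        Real.sqrt (∫ s in (0:ℝ)..T, ‖g₁ s - g₂ s‖ ^ 2)) := by
  haveI : IsFiniteMeasure (volume.restrict (Set.Icc (0:ℝ) T)) :=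
    ⟨by rw [Measure.restrict_apply_univ]; exact measure_Icc_lt_top⟩
  have hw₁T : IntegrableOn w₁ (Set.Icc 0 T) := hw₁.integrable one_le_two
  have hw₂T : IntegrableOn w₂ (Set.Icc 0 T) := hw₂.integrable one_le_two
  have hzIcc : ∀ t ∈ Set.Icc (0:ℝ) T,
      (fun s => z₁ s - z₂ s) t = ∫ s in Set.Ioc (0:ℝ) t, (w₁ s - w₂ s) := by
    intro t ht
    have h1 : IntervalIntegrable w₁ volume 0 t := by
      rw [intervalIntegrable_iff_integrableOn_Ioc_of_le ht.1]
      exact hw₁T.mono_set (fun x hx => ⟨le_of_lt hx.1, hx.2.trans ht.2⟩)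
    have h2 : IntervalIntegrable w₂ volume 0 t := by
      rw [intervalIntegrable_iff_integrableOn_Ioc_of_le ht.1]
      exact hw₂T.mono_set (fun x hx => ⟨le_of_lt hx.1, hx.2.trans ht.2⟩)
    show z₁ t - z₂ t = _
    rw [hz₁ t, hz₂ t, ← intervalIntegral.integral_sub h1 h2,
      intervalIntegral.integral_of_le ht.1]
  have hineq : ∀ᵐ s ∂(volume.restrict (Set.Icc (0:ℝ) T)),
      ⟪z₁ s - z₂ s, w₁ s - w₂ s⟫ + σ * ‖w₁ s - w₂ s‖ ^ 2 ≤ ⟪g₁ s - g₂ s, w₁ s - w₂ s⟫ := by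
    filter_upwards [hvi₁, hvi₂] with s h1 h2
    have h1' := h1 (w₂ s)
    have h2' := h2 (w₁ s)
    have hkey : (0:ℝ) ≤ ⟪(g₁ s - g₂ s) - (z₁ s - z₂ s) - σ • (w₁ s - w₂ s), w₁ s - w₂ s⟫ := by
      have hsum : ⟪g₁ s - z₁ s - σ • w₁ s, w₂ s - w₁ s⟫
          + ⟪g₂ s - z₂ s - σ • w₂ s, w₁ s - w₂ s⟫ ≤ 0 := by linarith
      have e1 : w₂ s - w₁ s = -(w₁ s - w₂ s) := by abel
      rw [e1, inner_neg_right] at hsum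
      have e2 : (g₁ s - g₂ s) - (z₁ s - z₂ s) - σ • (w₁ s - w₂ s)
          = (g₁ s - z₁ s - σ • w₁ s) - (g₂ s - z₂ s - σ • w₂ s) := by
        rw [smul_sub]; abel
      rw [e2, inner_sub_left]
      linarith
    rw [inner_sub_left, inner_sub_left, real_inner_smul_left,
      real_inner_self_eq_norm_sq] at hkey
    linarith
  obtain ⟨ha, hb, hc⟩ := main_aux T σ hT hσ (fun s => g₁ s - g₂ s) (fun s => w₁ s - w₂ s)
    (fun s => z₁ s - z₂ s) (hg₁.sub hg₂) (hw₁.sub hw₂) hzIcc hineq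
  refine ⟨fun t ht => ?_, ?_, fun t ht => ?_⟩
  · rw [intervalIntegral.integral_of_le ht.1, intervalIntegral.integral_of_le ht.1]
    exact ha t ht
  · rw [intervalIntegral.integral_of_le hT.le, intervalIntegral.integral_of_le hT.le]
    exact hb
  · rw [intervalIntegral.integral_of_le hT.le]
    exact hc t ht
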